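/- Let E be a real inner product space, let g : E → ℝ be continuous, and let ỹ ∈ E satisfy HasGradientAt g j ỹ with j ≠ 0 and g ỹ = 0. Suppose ŷ = ỹ + λ • j for some real λ, that g ŷ < 0, and that ỹ minimises the distance to ŷ over the coherent manifold, i.e. dist ỹ ŷ ≤ dist z ŷ for every z with g z = 0. Then λ < 0. -/

import Mathlib

open RealInnerProductSpace

/-- For a base forecast `yhat = ytil + λ • j` in the strict epigraph of the
constraint, where `ytil` is the projection of `yhat` onto the coherent manifold,
the Lagrange multiplier `λ` is negative. -/
theorem lagrange_multiplier_neg_of_epigraph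
    {E : Type*} [NormedAddCommGroup E] [InnerProductSpace ℝ E] [CompleteSpace E]
    (g : E → ℝ) (hgc : Continuous g)
    (ytil j : E) (hgrad : HasGradientAt g j ytil) (hj : j ≠ 0) (h0 : g ytil = 0)
    (lam : ℝ) (yhat : E) (hyhat : yhat = ytil + lam • j)
    (hepi : g yhat < 0)
    (hmin : ∀ z : E, g z = 0 → dist ytil yhat ≤ dist z yhat) :
    lam < 0 := by
  set φ : ℝ → ℝ := fun t => g (ytil + t • j) with hφ
  have hφc : Continuous φ := by continuity
  have hφ0 : φ 0 = 0 := by simp [hφ, h0]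
  have hφlam : φ lam = g yhat := by rw [hφ, hyhat]
  -- derivative of φ at 0 is ⟪j, j⟫
  have hcurve : HasDerivAt (fun t : ℝ => ytil + t • j) j 0 := by
    simpa using ((hasDerivAt_id (0:ℝ)).smul_const j).const_add ytil
  have hderiv : HasDerivAt φ ⟪j, j⟫ 0 := by
    have hF : HasFDerivAt g ((InnerProductSpace.toDual ℝ E) j) (ytil + (0:ℝ) • j) := by
      simpa using hgrad.hasFDerivAt
    have := hF.comp_hasDerivAt 0 hcurve
    simpa [InnerProductSpace.toDual_apply_apply, Function.comp_def] using this
  have hjj : (0:ℝ) < ⟪j, j⟫ := by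
    rw [real_inner_self_eq_norm_sq]
    exact pow_pos (norm_pos_iff.mpr hj) 2
  -- λ ≠ 0
  rcases lt_trichotomy lam 0 with h | h | h
  · exact h
  · exfalso; rw [h] at hyhat; simp at hyhat
    rw [hyhat, h0] at hepi; exact lt_irrefl 0 hepi
  · exfalso
    -- find small t > 0 with φ t > 0
    have hslope : Filter.Tendsto (slope φ 0) (nhdsWithin 0 {(0:ℝ)}ᶜ) (nhds ⟪j, j⟫) :=
      hasDerivAt_iff_tendsto_slope.mp hderiv
    have hev : ∀ᶠ t in nhdsWithin 0 {(0:ℝ)}ᶜ, 0 < slope φ 0 t ∧ |t| < lam := by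
      filter_upwards [hslope.eventually (eventually_gt_nhds hjj),
        eventually_nhdsWithin_of_eventually_nhds
          (eventually_abs_sub_lt 0 h)] with t h1 h2
      refine ⟨h1, by simpa using h2⟩
    have hsub : nhdsWithin (0:ℝ) (Set.Ioi 0) ≤ nhdsWithin 0 {(0:ℝ)}ᶜ :=
      nhdsWithin_mono 0 (fun x hx => ne_of_gt hx)
    obtain ⟨t, ⟨hsl, habs⟩, ht0⟩ :=
      (((hev.filter_mono hsub).and self_mem_nhdsWithin)).exists
    have ht0' : 0 < t := ht0
    have htlam : t < lam := lt_of_le_of_lt (le_abs_self t) habs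
    have hφt : 0 < φ t := by
      have : slope φ 0 t = φ t / t := by simp [slope, hφ0, div_eq_inv_mul]
      rw [this] at hsl
      exact (div_pos_iff.mp hsl).resolve_right (fun ⟨_, h⟩ => absurd ht0' (not_lt.mpr h.le)) |>.1
    -- IVT on [t, lam]
    have hivt : (0:ℝ) ∈ Set.Icc (φ lam) (φ t) := by
      constructor
      · rw [hφlam]; exact hepi.le
      · exact hφt.le
    obtain ⟨s, hs, hφs⟩ := intermediate_value_Icc' htlam.le (hφc.continuousOn) hivt
    have hs0 : 0 < s := lt_of_lt_of_le ht0' hs.1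
    have hdy : dist ytil yhat = lam * ‖j‖ := by
      rw [hyhat, dist_eq_norm]
      simp [norm_smul, abs_of_pos h]
    have hdz : dist (ytil + s • j) yhat = (lam - s) * ‖j‖ := by
      rw [hyhat, dist_eq_norm]
      have : ytil + s • j - (ytil + lam • j) = (s - lam) • j := by
        rw [sub_smul]; abel
      rw [this, norm_smul, Real.norm_eq_abs, abs_of_nonpos (by linarith [hs.2])]
      ring
    have := hmin (ytil + s • j) hφs
    rw [hdy, hdz] at this
    have hjn : 0 < ‖j‖ := norm_pos_iff.mpr hj
    nlinarith
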